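/- Let y_1, …, y_n be nonzero vectors in ℝ^q that span ℝ^q and let c > 0. Let Γ be a symmetric positive definite q×q matrix, let α > 0, and set Γ′ = α · Γ^(1/2) N(Γ) Γ^(1/2). Let λ₁ and λ_q denote the largest and smallest eigenvalues of N(Γ), and λ₁′ and λ_q′ those of N(Γ′). If λ₁ > 1/α and λ_q < 1/α, then λ₁′ ≤ λ₁ and λ_q′ ≥ λ_q. -/

import Mathlib

open Matrix Classical

/-- Principal (symmetric positive semidefinite) square root of a matrix;
junk value `0` if the matrix is not positive semidefinite. -/
noncomputable def matSqrt {q : ℕ} (A : Matrix (Fin q) (Fin q) ℝ) : Matrix (Fin q) (Fin q) ℝ :=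
  if h : A.PosSemidef then h.1.eigenvectorUnitary.1 * diagonal ((√·) ∘ h.1.eigenvalues) *
    (star h.1.eigenvectorUnitary : Matrix (Fin q) (Fin q) ℝ) else 0

/-- Loewner order: `loewnerLE A B` iff `B - A` is positive semidefinite. -/
def loewnerLE {q : ℕ} (A B : Matrix (Fin q) (Fin q) ℝ) : Prop := (B - A).PosSemidef

/-- Largest eigenvalue of a (Hermitian) matrix; junk value `0` otherwise. -/
noncomputable def maxEig {q : ℕ} (A : Matrix (Fin q) (Fin q) ℝ) : ℝ :=
  if h : A.IsHermitian then ⨆ i, h.eigenvalues i else 0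

/-- Smallest eigenvalue of a (Hermitian) matrix; junk value `0` otherwise. -/
noncomputable def minEig {q : ℕ} (A : Matrix (Fin q) (Fin q) ℝ) : ℝ :=
  if h : A.IsHermitian then ⨅ i, h.eigenvalues i else 0

/-- The map `N(Γ) = c ∑ᵢ (Γ^(-1/2) yᵢ yᵢᵀ Γ^(-1/2)) / (yᵢᵀ Γ⁻¹ yᵢ) + Γ⁻¹`. -/
noncomputable def Nmat {q n : ℕ} (y : Fin n → (Fin q → ℝ)) (c : ℝ)
    (Γ : Matrix (Fin q) (Fin q) ℝ) : Matrix (Fin q) (Fin q) ℝ :=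
  c • ∑ i, (y i ⬝ᵥ Γ⁻¹ *ᵥ y i)⁻¹ •
      ((matSqrt Γ)⁻¹ * vecMulVec (y i) (y i) * (matSqrt Γ)⁻¹)
    + Γ⁻¹

/-- auxiliary: the "core" matrix `T(Γ)` -/
noncomputable def Tmat {q n : ℕ} (y : Fin n → (Fin q → ℝ)) (c : ℝ)
    (Γ : Matrix (Fin q) (Fin q) ℝ) : Matrix (Fin q) (Fin q) ℝ :=
  c • ∑ i, (y i ⬝ᵥ Γ⁻¹ *ᵥ y i)⁻¹ • vecMulVec (y i) (y i)

section helpers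
variable {q : ℕ}

lemma matSqrt_psd_of_psd {A : Matrix (Fin q) (Fin q) ℝ} (h : A.PosSemidef) :
    (matSqrt A).PosSemidef := by
  rw [matSqrt, dif_pos h]
  have hd : (diagonal ((√·) ∘ h.1.eigenvalues)).PosSemidef :=
    Matrix.posSemidef_diagonal_iff.mpr fun i => Real.sqrt_nonneg _
  have := hd.mul_mul_conjTranspose_same (h.1.eigenvectorUnitary : Matrix (Fin q) (Fin q) ℝ)
  rwa [← Matrix.star_eq_conjTranspose, ← Unitary.coe_star] at this

lemma matSqrt_mul_self_of_psd {A : Matrix (Fin q) (Fin q) ℝ} (h : A.PosSemidef) :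
    matSqrt A * matSqrt A = A := by
  rw [matSqrt, dif_pos h]
  have hD : diagonal ((√·) ∘ h.1.eigenvalues) * diagonal ((√·) ∘ h.1.eigenvalues)
      = diagonal (RCLike.ofReal ∘ h.1.eigenvalues) := by
    rw [diagonal_mul_diagonal]; congr 1; funext i
    simp [Real.mul_self_sqrt (h.eigenvalues_nonneg i)]
  have hsp := h.1.spectral_theorem
  rw [Unitary.conjStarAlgAut_apply, ← hD] at hsp
  conv_rhs => rw [hsp]
  have hUU := Unitary.coe_star_mul_self h.1.eigenvectorUnitary
  simp only [Matrix.mul_assoc]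
  rw [← Matrix.mul_assoc (star (h.1.eigenvectorUnitary : Matrix (Fin q) (Fin q) ℝ)), hUU,
    Matrix.one_mul]

lemma matSqrt_psd {Γ : Matrix (Fin q) (Fin q) ℝ} (hΓ : Γ.PosDef) : (matSqrt Γ).PosSemidef := by
  exact matSqrt_psd_of_psd hΓ.posSemidef

lemma matSqrt_mul_self {Γ : Matrix (Fin q) (Fin q) ℝ} (hΓ : Γ.PosDef) :
    matSqrt Γ * matSqrt Γ = Γ := by
  exact matSqrt_mul_self_of_psd hΓ.posSemidef

lemma matSqrt_det {Γ : Matrix (Fin q) (Fin q) ℝ} (hΓ : Γ.PosDef) : IsUnit (matSqrt Γ).det := by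
  have hΓu : IsUnit Γ.det := (Matrix.isUnit_iff_isUnit_det _).mp hΓ.isUnit
  rw [← matSqrt_mul_self hΓ, det_mul] at hΓu
  exact isUnit_of_mul_isUnit_left hΓu

lemma matSqrt_inv_det {Γ : Matrix (Fin q) (Fin q) ℝ} (hΓ : Γ.PosDef) :
    IsUnit (matSqrt Γ)⁻¹.det := by
  have h1 : (matSqrt Γ)⁻¹.det * (matSqrt Γ).det = 1 := by
    rw [← det_mul, nonsing_inv_mul _ (matSqrt_det hΓ), det_one]
  exact IsUnit.of_mul_eq_one _ h1

lemma psd_smul {A : Matrix (Fin q) (Fin q) ℝ} (hA : A.PosSemidef) {r : ℝ} (hr : 0 ≤ r) :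
    (r • A).PosSemidef := by
  refine Matrix.PosSemidef.of_dotProduct_mulVec_nonneg ?_ fun x => ?_
  · unfold Matrix.IsHermitian
    rw [conjTranspose_smul, hA.1.eq]; simp
  · rw [smul_mulVec, dotProduct_smul]
    exact mul_nonneg hr (hA.dotProduct_mulVec_nonneg x)

lemma pd_smul {A : Matrix (Fin q) (Fin q) ℝ} (hA : A.PosDef) {r : ℝ} (hr : 0 < r) :
    (r • A).PosDef := by
  refine Matrix.PosDef.of_dotProduct_mulVec_pos ?_ fun x hx => ?_
  · unfold Matrix.IsHermitian
    rw [conjTranspose_smul, hA.1.eq]; simp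
  · rw [smul_mulVec, dotProduct_smul]
    exact mul_pos hr (hA.dotProduct_mulVec_pos hx)

lemma psd_vecMulVec (v : Fin q → ℝ) : (vecMulVec v v).PosSemidef := by
  have hmv : ∀ x : Fin q → ℝ, vecMulVec v v *ᵥ x = (v ⬝ᵥ x) • v := by
    intro x; ext j
    simp only [vecMulVec, mulVec, dotProduct, of_apply, Pi.smul_apply, smul_eq_mul,
      Finset.sum_mul, Finset.mul_sum]
    exact Finset.sum_congr rfl fun k _ => by ring
  refine Matrix.PosSemidef.of_dotProduct_mulVec_nonneg ?_ fun x => ?_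
  · unfold Matrix.IsHermitian
    ext i j; simp [vecMulVec, conjTranspose_apply, mul_comm]
  · rw [hmv, star_trivial, dotProduct_smul, smul_eq_mul, dotProduct_comm]
    exact mul_self_nonneg _

lemma psd_sum {n : ℕ} (f : Fin n → Matrix (Fin q) (Fin q) ℝ) (hf : ∀ i, (f i).PosSemidef) :
    (∑ i, f i).PosSemidef :=
  Finset.sum_induction f _ (fun _ _ ha hb => ha.add hb) Matrix.PosSemidef.zero
    (fun i _ => hf i)

lemma psd_conj' {A B : Matrix (Fin q) (Fin q) ℝ} (hA : A.PosSemidef) (hB : B.IsHermitian) :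
    (B * A * B).PosSemidef := by
  have := hA.mul_mul_conjTranspose_same B
  rwa [hB.eq] at this

lemma pd_conj {A B : Matrix (Fin q) (Fin q) ℝ} (hA : A.PosDef) (hB : B.IsHermitian)
    (hBu : IsUnit B.det) : (B * A * B).PosDef := by
  refine Matrix.PosDef.of_dotProduct_mulVec_pos (psd_conj' hA.posSemidef hB).1 fun x hx => ?_
  have hu : B *ᵥ x ≠ 0 := by
    intro h
    apply hx
    have := congrArg (fun z => B⁻¹ *ᵥ z) h
    simpa [mulVec_mulVec, Matrix.nonsing_inv_mul B hBu] using this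
  have hpos := hA.dotProduct_mulVec_pos hu
  rw [star_trivial] at hpos ⊢
  have hBt : Bᵀ = B := by
    ext i j
    have := congrFun (congrFun hB.eq i) j
    simpa using this
  have key : x ᵥ* B = B *ᵥ x := by
    conv_lhs => rw [← hBt]
    rw [vecMul_transpose]
  calc 0 < (B *ᵥ x) ⬝ᵥ A *ᵥ (B *ᵥ x) := hpos
    _ = x ⬝ᵥ (B * A * B) *ᵥ x := by
        rw [← mulVec_mulVec, ← mulVec_mulVec, dotProduct_mulVec x, key]

lemma eig_dot (A : Matrix (Fin q) (Fin q) ℝ) (hA : A.IsHermitian) (i : Fin q) :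
    (⇑(hA.eigenvectorBasis i) : Fin q → ℝ) ⬝ᵥ (⇑(hA.eigenvectorBasis i)) = 1 := by
  have h1 : ‖hA.eigenvectorBasis i‖ = 1 := hA.eigenvectorBasis.orthonormal.1 i
  have h2 : (inner ℝ (hA.eigenvectorBasis i) (hA.eigenvectorBasis i) : ℝ) = 1 := by
    rw [real_inner_self_eq_norm_mul_norm, h1, mul_one]
  rw [← h2]
  rw [EuclideanSpace.inner_eq_star_dotProduct, star_trivial]

lemma smul_one_sub_psd_iff {A : Matrix (Fin q) (Fin q) ℝ} (hA : A.IsHermitian) {μ : ℝ} :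
    (μ • (1 : Matrix (Fin q) (Fin q) ℝ) - A).PosSemidef ↔ ∀ i, hA.eigenvalues i ≤ μ := by
  constructor
  · intro h i
    have h2 := h.dotProduct_mulVec_nonneg (⇑(hA.eigenvectorBasis i))
    rw [star_trivial, sub_mulVec, smul_mulVec, one_mulVec,
      hA.mulVec_eigenvectorBasis, dotProduct_sub, dotProduct_smul, dotProduct_smul,
      eig_dot A hA i] at h2
    simp only [smul_eq_mul, mul_one] at h2
    linarith
  · intro h
    have hsp := hA.spectral_theorem
    rw [Unitary.conjStarAlgAut_apply] at hsp
    set U : Matrix (Fin q) (Fin q) ℝ := (hA.eigenvectorUnitary : Matrix (Fin q) (Fin q) ℝ) with hU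
    have hUU : U * star U = 1 := Matrix.mem_unitaryGroup_iff.mp (hA.eigenvectorUnitary).2
    have key : μ • (1 : Matrix (Fin q) (Fin q) ℝ) - A
        = U * diagonal (fun i => μ - hA.eigenvalues i) * Uᴴ := by
      have hd : diagonal (fun i => μ - hA.eigenvalues i)
          = μ • (1 : Matrix (Fin q) (Fin q) ℝ) - diagonal (RCLike.ofReal ∘ hA.eigenvalues) := by
        ext i j
        by_cases hij : i = j
        · subst hij; simp [Matrix.diagonal_apply_eq]
        · simp [Matrix.diagonal_apply_ne _ hij, Matrix.one_apply_ne hij]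
      rw [hd, Matrix.mul_sub, Matrix.sub_mul, Matrix.mul_smul, Matrix.smul_mul, Matrix.mul_one,
        ← Matrix.star_eq_conjTranspose, hUU, ← hsp]
    rw [key]
    exact (Matrix.posSemidef_diagonal_iff.mpr fun i =>
      sub_nonneg.mpr (h i)).mul_mul_conjTranspose_same U

lemma sub_smul_one_psd_iff {A : Matrix (Fin q) (Fin q) ℝ} (hA : A.IsHermitian) {μ : ℝ} :
    (A - μ • (1 : Matrix (Fin q) (Fin q) ℝ)).PosSemidef ↔ ∀ i, μ ≤ hA.eigenvalues i := by
  constructor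
  · intro h i
    have h2 := h.dotProduct_mulVec_nonneg (⇑(hA.eigenvectorBasis i))
    rw [star_trivial, sub_mulVec, smul_mulVec, one_mulVec,
      hA.mulVec_eigenvectorBasis, dotProduct_sub, dotProduct_smul, dotProduct_smul,
      eig_dot A hA i] at h2
    simp only [smul_eq_mul, mul_one] at h2
    linarith
  · intro h
    have hsp := hA.spectral_theorem
    rw [Unitary.conjStarAlgAut_apply] at hsp
    set U : Matrix (Fin q) (Fin q) ℝ := (hA.eigenvectorUnitary : Matrix (Fin q) (Fin q) ℝ) with hU
    have hUU : U * star U = 1 := Matrix.mem_unitaryGroup_iff.mp (hA.eigenvectorUnitary).2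
    have key : A - μ • (1 : Matrix (Fin q) (Fin q) ℝ)
        = U * diagonal (fun i => hA.eigenvalues i - μ) * Uᴴ := by
      have hd : diagonal (fun i => hA.eigenvalues i - μ)
          = diagonal (RCLike.ofReal ∘ hA.eigenvalues) - μ • (1 : Matrix (Fin q) (Fin q) ℝ) := by
        ext i j
        by_cases hij : i = j
        · subst hij; simp [Matrix.diagonal_apply_eq]
        · simp [Matrix.diagonal_apply_ne _ hij, Matrix.one_apply_ne hij]
      rw [hd, Matrix.mul_sub, Matrix.sub_mul, Matrix.mul_smul, Matrix.smul_mul, Matrix.mul_one,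
        ← Matrix.star_eq_conjTranspose, hUU, ← hsp]
    rw [key]
    exact (Matrix.posSemidef_diagonal_iff.mpr fun i =>
      sub_nonneg.mpr (h i)).mul_mul_conjTranspose_same U

lemma inv_antitone {A B : Matrix (Fin q) (Fin q) ℝ} (hA : A.PosDef) (hB : B.PosDef)
    (h : (B - A).PosSemidef) : (A⁻¹ - B⁻¹).PosSemidef := by
  have hAu : IsUnit A.det := (Matrix.isUnit_iff_isUnit_det _).mp hA.isUnit
  have hBu : IsUnit B.det := (Matrix.isUnit_iff_isUnit_det _).mp hB.isUnit
  set S := matSqrt A with hSdef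
  have hSpsd : S.PosSemidef := matSqrt_psd hA
  have hSS : S * S = A := matSqrt_mul_self hA
  have hSu : IsUnit S.det := by
    have := hAu
    rw [← hSS, det_mul] at this
    exact isUnit_of_mul_isUnit_left this
  have hS1 : S⁻¹ * S = 1 := nonsing_inv_mul S hSu
  have hSr : S * S⁻¹ = 1 := mul_nonsing_inv S hSu
  have hSinvH : S⁻¹.IsHermitian := hSpsd.1.inv
  set C := S⁻¹ * B * S⁻¹ with hCdef
  have hC : C.PosSemidef := psd_conj' hB.posSemidef hSinvH
  have hCinv : C * (S * B⁻¹ * S) = 1 := by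
    rw [hCdef]
    calc S⁻¹ * B * S⁻¹ * (S * B⁻¹ * S)
        = S⁻¹ * B * ((S⁻¹ * S) * B⁻¹ * S) := by noncomm_ring
      _ = S⁻¹ * (B * B⁻¹) * S := by rw [hS1]; noncomm_ring
      _ = 1 := by rw [mul_nonsing_inv B hBu, Matrix.mul_one, hS1]
  have hCu : IsUnit C.det := by
    have hdet : C.det * (S * B⁻¹ * S).det = 1 := by rw [← det_mul, hCinv, det_one]
    exact IsUnit.of_mul_eq_one _ hdet
  set D := matSqrt C with hDdef
  have hDpsd : D.PosSemidef := matSqrt_psd_of_psd hC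
  have hDD : D * D = C := matSqrt_mul_self_of_psd hC
  have hDu : IsUnit D.det := by
    have := hCu
    rw [← hDD, det_mul] at this
    exact isUnit_of_mul_isUnit_left this
  have hD1 : D⁻¹ * D = 1 := nonsing_inv_mul D hDu
  have hDr : D * D⁻¹ = 1 := mul_nonsing_inv D hDu
  have hDinvH : D⁻¹.IsHermitian := hDpsd.1.inv
  have hDDinv : D⁻¹ * D⁻¹ = C⁻¹ := by rw [← Matrix.mul_inv_rev, hDD]
  have e1 : S⁻¹ * A * S⁻¹ = 1 := by
    rw [← hSS]
    calc S⁻¹ * (S * S) * S⁻¹ = (S⁻¹ * S) * (S * S⁻¹) := by noncomm_ring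
      _ = 1 := by rw [hS1, hSr, Matrix.mul_one]
  have hstep1 : (C - 1).PosSemidef := by
    have : S⁻¹ * (B - A) * S⁻¹ = C - 1 := by
      rw [Matrix.mul_sub, Matrix.sub_mul, e1, hCdef]
    rw [← this]
    exact psd_conj' h hSinvH
  have e2 : D⁻¹ * C * D⁻¹ = 1 := by
    rw [← hDD]
    calc D⁻¹ * (D * D) * D⁻¹ = (D⁻¹ * D) * (D * D⁻¹) := by noncomm_ring
      _ = 1 := by rw [hD1, hDr, Matrix.mul_one]
  have hstep2 : ((1 : Matrix (Fin q) (Fin q) ℝ) - C⁻¹).PosSemidef := by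
    have : D⁻¹ * (C - 1) * D⁻¹ = 1 - C⁻¹ := by
      rw [Matrix.mul_sub, Matrix.sub_mul, e2, Matrix.mul_one, hDDinv]
    rw [← this]
    exact psd_conj' hstep1 hDinvH
  have eA : S⁻¹ * 1 * S⁻¹ = A⁻¹ := by
    rw [Matrix.mul_one, ← Matrix.mul_inv_rev, hSS]
  have eCinv : C⁻¹ = S * B⁻¹ * S := Matrix.inv_eq_right_inv hCinv
  have eB : S⁻¹ * C⁻¹ * S⁻¹ = B⁻¹ := by
    rw [eCinv]
    calc S⁻¹ * (S * B⁻¹ * S) * S⁻¹ = (S⁻¹ * S) * B⁻¹ * (S * S⁻¹) := by noncomm_ring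
      _ = B⁻¹ := by rw [hS1, hSr, Matrix.one_mul, Matrix.mul_one]
  have final : S⁻¹ * (1 - C⁻¹) * S⁻¹ = A⁻¹ - B⁻¹ := by
    rw [Matrix.mul_sub, Matrix.sub_mul, eA, eB]
  rw [← final]
  exact psd_conj' hstep2 hSinvH

lemma dot_mono {A B : Matrix (Fin q) (Fin q) ℝ} (h : (B - A).PosSemidef) (x : Fin q → ℝ) :
    x ⬝ᵥ A *ᵥ x ≤ x ⬝ᵥ B *ᵥ x := by
  have := h.dotProduct_mulVec_nonneg x
  rw [star_trivial, sub_mulVec, dotProduct_sub] at this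
  linarith

lemma Nmat_eq {n : ℕ} (y : Fin n → (Fin q → ℝ)) (c : ℝ) {Γ : Matrix (Fin q) (Fin q) ℝ}
    (hΓ : Γ.PosDef) :
    Nmat y c Γ = (matSqrt Γ)⁻¹ * (Tmat y c Γ + 1) * (matSqrt Γ)⁻¹ := by
  rw [Nmat, Tmat]
  simp only [Matrix.mul_add, Matrix.add_mul, Matrix.mul_smul, Matrix.smul_mul,
    Matrix.mul_sum, Matrix.sum_mul, Matrix.mul_one, Matrix.one_mul]
  congr 1
  conv_lhs => rw [← matSqrt_mul_self hΓ]
  rw [Matrix.mul_inv_rev]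

lemma conj_sqrt_Nmat {n : ℕ} (y : Fin n → (Fin q → ℝ)) (c : ℝ) {Γ : Matrix (Fin q) (Fin q) ℝ}
    (hΓ : Γ.PosDef) :
    matSqrt Γ * Nmat y c Γ * matSqrt Γ = Tmat y c Γ + 1 := by
  set S := matSqrt Γ
  have hS1 : S⁻¹ * S = 1 := nonsing_inv_mul S (matSqrt_det hΓ)
  have hSr : S * S⁻¹ = 1 := mul_nonsing_inv S (matSqrt_det hΓ)
  rw [Nmat_eq y c hΓ]
  calc S * (S⁻¹ * (Tmat y c Γ + 1) * S⁻¹) * S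
      = (S * S⁻¹) * (Tmat y c Γ + 1) * (S⁻¹ * S) := by noncomm_ring
    _ = Tmat y c Γ + 1 := by rw [hS1, hSr, Matrix.one_mul, Matrix.mul_one]

lemma Tmat_psd {n : ℕ} (y : Fin n → (Fin q → ℝ)) {c : ℝ} (hc : 0 ≤ c)
    {Γ : Matrix (Fin q) (Fin q) ℝ} (hΓ : Γ.PosDef) (hy : ∀ i, y i ≠ 0) :
    (Tmat y c Γ).PosSemidef := by
  refine psd_smul (psd_sum _ fun i => ?_) hc
  refine psd_smul (psd_vecMulVec _) ?_
  have := hΓ.inv.dotProduct_mulVec_pos (hy i)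
  rw [star_trivial] at this
  exact inv_nonneg.mpr this.le

lemma Nmat_posDef {n : ℕ} (y : Fin n → (Fin q → ℝ)) {c : ℝ} (hc : 0 ≤ c)
    {Γ : Matrix (Fin q) (Fin q) ℝ} (hΓ : Γ.PosDef) (hy : ∀ i, y i ≠ 0) :
    (Nmat y c Γ).PosDef := by
  rw [Nmat_eq y c hΓ]
  exact pd_conj (Matrix.PosDef.posSemidef_add (Tmat_psd y hc hΓ hy) Matrix.PosDef.one)
    (matSqrt_psd hΓ).1.inv (matSqrt_inv_det hΓ)

end helpers

section eigHelpers
variable {q : ℕ}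

lemma maxEig_le [Nonempty (Fin q)] {A : Matrix (Fin q) (Fin q) ℝ} (hA : A.IsHermitian) {μ : ℝ}
    (h : ∀ i, hA.eigenvalues i ≤ μ) : maxEig A ≤ μ := by
  unfold maxEig; rw [dif_pos hA]; exact ciSup_le h

lemma le_maxEig {A : Matrix (Fin q) (Fin q) ℝ} (hA : A.IsHermitian) (i : Fin q) :
    hA.eigenvalues i ≤ maxEig A := by
  unfold maxEig; rw [dif_pos hA]
  exact le_ciSup (Set.Finite.bddAbove (Set.finite_range _)) i

lemma minEig_le {A : Matrix (Fin q) (Fin q) ℝ} (hA : A.IsHermitian) (i : Fin q) :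
    minEig A ≤ hA.eigenvalues i := by
  unfold minEig; rw [dif_pos hA]
  exact ciInf_le (Set.Finite.bddBelow (Set.finite_range _)) i

lemma le_minEig [Nonempty (Fin q)] {A : Matrix (Fin q) (Fin q) ℝ} (hA : A.IsHermitian) {μ : ℝ}
    (h : ∀ i, μ ≤ hA.eigenvalues i) : μ ≤ minEig A := by
  unfold minEig; rw [dif_pos hA]; exact le_ciInf h


lemma minEig_pos [Nonempty (Fin q)] {A : Matrix (Fin q) (Fin q) ℝ} (hA : A.PosDef) :
    0 < minEig A := by
  obtain ⟨i₀, hi₀⟩ := Finite.exists_min hA.1.eigenvalues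
  exact lt_of_lt_of_le (hA.eigenvalues_pos i₀) (le_minEig hA.1 hi₀)

end eigHelpers

/-- If the nonzero `yᵢ` span `ℝ^q`, `c > 0`, `Γ ≻ 0`, `α > 0` and
`Γ' = α · Γ^(1/2) N(Γ) Γ^(1/2)`, and if the largest eigenvalue `λ₁` of `N(Γ)` satisfies
`λ₁ > 1/α` while the smallest eigenvalue `λ_q` satisfies `λ_q < 1/α`, then
`λ₁' ≤ λ₁` and `λ_q' ≥ λ_q`, where `λ₁'`, `λ_q'` are the extreme eigenvalues of `N(Γ')`. -/
theorem Nmat_extreme_eigenvalues_monotone {q n : ℕ}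
    (y : Fin n → (Fin q → ℝ)) (hy : ∀ i, y i ≠ 0)
    (hspan : Submodule.span ℝ (Set.range y) = ⊤)
    {c : ℝ} (hc : 0 < c)
    {Γ : Matrix (Fin q) (Fin q) ℝ} (hΓ : Γ.PosDef)
    {α : ℝ} (hα : 0 < α)
    {Γ' : Matrix (Fin q) (Fin q) ℝ}
    (hΓ' : Γ' = α • (matSqrt Γ * Nmat y c Γ * matSqrt Γ))
    (hlam1 : 1 / α < maxEig (Nmat y c Γ))
    (hlamq : minEig (Nmat y c Γ) < 1 / α) :
    maxEig (Nmat y c Γ') ≤ maxEig (Nmat y c Γ) ∧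
      minEig (Nmat y c Γ) ≤ minEig (Nmat y c Γ') := by
  rcases Nat.eq_zero_or_pos q with hq0 | hq0
  · subst hq0
    exfalso
    have h0 : maxEig (Nmat y c Γ) = 0 := by
      unfold maxEig
      split
      · exact Real.iSup_of_isEmpty _
      · rfl
    rw [h0] at hlam1
    have : (0:ℝ) < 1/α := by positivity
    linarith
  haveI : Nonempty (Fin q) := Fin.pos_iff_nonempty.mp hq0
  have hΓu : IsUnit Γ.det := (Matrix.isUnit_iff_isUnit_det _).mp hΓ.isUnit
  have hSS : matSqrt Γ * matSqrt Γ = Γ := matSqrt_mul_self hΓ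
  have hSh : (matSqrt Γ).IsHermitian := (matSqrt_psd hΓ).1
  have hNpd : (Nmat y c Γ).PosDef := Nmat_posDef y hc.le hΓ hy
  have hNh : (Nmat y c Γ).IsHermitian := hNpd.1
  have hTpsd : (Tmat y c Γ).PosSemidef := Tmat_psd y hc.le hΓ hy
  have hT1pd : (Tmat y c Γ + 1).PosDef :=
    Matrix.PosDef.posSemidef_add hTpsd Matrix.PosDef.one
  have hΓ'e : Γ' = α • (Tmat y c Γ + 1) := by rw [hΓ', conj_sqrt_Nmat y c hΓ]
  have hΓ'pd : Γ'.PosDef := by rw [hΓ'e]; exact pd_smul hT1pd hα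
  have hl1pos : (0:ℝ) < maxEig (Nmat y c Γ) := lt_trans (by positivity) hlam1
  have hal1 : 1 < α * maxEig (Nmat y c Γ) := by
    have := (div_lt_iff₀ hα).mp hlam1
    linarith [mul_comm α (maxEig (Nmat y c Γ))]
  have hlamqpos : (0:ℝ) < minEig (Nmat y c Γ) := minEig_pos hNpd
  have halq : α * minEig (Nmat y c Γ) < 1 := by
    have := (lt_div_iff₀ hα).mp hlamq
    linarith [mul_comm α (minEig (Nmat y c Γ))]
  have hw : ∀ i, 0 < y i ⬝ᵥ Γ⁻¹ *ᵥ y i := fun i => by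
    have := hΓ.inv.dotProduct_mulVec_pos (hy i); rwa [star_trivial] at this
  have hw' : ∀ i, 0 < y i ⬝ᵥ Γ'⁻¹ *ᵥ y i := fun i => by
    have := hΓ'pd.inv.dotProduct_mulVec_pos (hy i); rwa [star_trivial] at this
  -- data for `Γ'`
  have hS'S : matSqrt Γ' * matSqrt Γ' = Γ' := matSqrt_mul_self hΓ'pd
  have hS'1 : (matSqrt Γ')⁻¹ * matSqrt Γ' = 1 := nonsing_inv_mul _ (matSqrt_det hΓ'pd)
  have hS'r : matSqrt Γ' * (matSqrt Γ')⁻¹ = 1 := mul_nonsing_inv _ (matSqrt_det hΓ'pd)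
  have hS'invH : ((matSqrt Γ')⁻¹).IsHermitian := (matSqrt_psd hΓ'pd).1.inv
  have hN'pd : (Nmat y c Γ').PosDef := Nmat_posDef y hc.le hΓ'pd hy
  have hN'h : (Nmat y c Γ').IsHermitian := hN'pd.1
  have eΓ' : (matSqrt Γ')⁻¹ * Γ' * (matSqrt Γ')⁻¹ = 1 := by
    have e0 : (matSqrt Γ')⁻¹ * (matSqrt Γ' * matSqrt Γ') * (matSqrt Γ')⁻¹ = 1 := by
      calc (matSqrt Γ')⁻¹ * (matSqrt Γ' * matSqrt Γ') * (matSqrt Γ')⁻¹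
          = ((matSqrt Γ')⁻¹ * matSqrt Γ') * (matSqrt Γ' * (matSqrt Γ')⁻¹) := by noncomm_ring
        _ = 1 := by rw [hS'1, hS'r, Matrix.mul_one]
    rwa [hS'S] at e0
  constructor
  · -- upper bound
    have hA1 : (maxEig (Nmat y c Γ) • (1 : Matrix (Fin q) (Fin q) ℝ) - Nmat y c Γ).PosSemidef :=
      (smul_one_sub_psd_iff hNh).mpr fun i => le_maxEig hNh i
    have hTB : (maxEig (Nmat y c Γ) • Γ - (Tmat y c Γ + 1)).PosSemidef := by
      have h := psd_conj' hA1 hSh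
      have e : matSqrt Γ * (maxEig (Nmat y c Γ) • (1 : Matrix (Fin q) (Fin q) ℝ)
            - Nmat y c Γ) * matSqrt Γ
          = maxEig (Nmat y c Γ) • Γ - (Tmat y c Γ + 1) := by
        rw [Matrix.mul_sub, Matrix.sub_mul, conj_sqrt_Nmat y c hΓ, Matrix.mul_smul,
          Matrix.mul_one, Matrix.smul_mul, hSS]
      rwa [e] at h
    have hBΓ : ((α * maxEig (Nmat y c Γ)) • Γ - Γ').PosSemidef := by
      rw [hΓ'e]
      have e : (α * maxEig (Nmat y c Γ)) • Γ - α • (Tmat y c Γ + 1)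
          = α • (maxEig (Nmat y c Γ) • Γ - (Tmat y c Γ + 1)) := by module
      rw [e]; exact psd_smul hTB hα.le
    have hPD2 : ((α * maxEig (Nmat y c Γ)) • Γ).PosDef := pd_smul hΓ (by positivity)
    have hinv1 : (Γ'⁻¹ - ((α * maxEig (Nmat y c Γ)) • Γ)⁻¹).PosSemidef :=
      inv_antitone hΓ'pd hPD2 hBΓ
    have hsmulinv : ((α * maxEig (Nmat y c Γ)) • Γ)⁻¹
        = (α * maxEig (Nmat y c Γ))⁻¹ • Γ⁻¹ := by
      apply Matrix.inv_eq_right_inv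
      rw [Matrix.smul_mul, Matrix.mul_smul, smul_smul, mul_nonsing_inv Γ hΓu,
        mul_inv_cancel₀ (by positivity : α * maxEig (Nmat y c Γ) ≠ 0), one_smul]
    have hcoef1 : ∀ i, (y i ⬝ᵥ Γ'⁻¹ *ᵥ y i)⁻¹
        ≤ (α * maxEig (Nmat y c Γ)) * (y i ⬝ᵥ Γ⁻¹ *ᵥ y i)⁻¹ := by
      intro i
      have hmono := dot_mono hinv1 (y i)
      rw [hsmulinv, smul_mulVec, dotProduct_smul, smul_eq_mul] at hmono
      have h1 : 0 < (α * maxEig (Nmat y c Γ))⁻¹ * (y i ⬝ᵥ Γ⁻¹ *ᵥ y i) := by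
        have := hw i; positivity
      have h2 := inv_anti₀ h1 hmono
      rwa [mul_inv, inv_inv] at h2
    have hTT : ((α * maxEig (Nmat y c Γ)) • Tmat y c Γ - Tmat y c Γ').PosSemidef := by
      have e : (α * maxEig (Nmat y c Γ)) • Tmat y c Γ - Tmat y c Γ'
          = c • ∑ i, ((α * maxEig (Nmat y c Γ)) * (y i ⬝ᵥ Γ⁻¹ *ᵥ y i)⁻¹
              - (y i ⬝ᵥ Γ'⁻¹ *ᵥ y i)⁻¹) • vecMulVec (y i) (y i) := by
        rw [Tmat, Tmat, smul_comm (α * maxEig (Nmat y c Γ)) c, ← smul_sub,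
          Finset.smul_sum, ← Finset.sum_sub_distrib]
        congr 1
        refine Finset.sum_congr rfl fun i _ => ?_
        rw [smul_smul, ← sub_smul]
      rw [e]
      exact psd_smul (psd_sum _ fun i =>
        psd_smul (psd_vecMulVec _) (sub_nonneg.mpr (hcoef1 i))) hc.le
    have hD1 : (maxEig (Nmat y c Γ) • Γ' - (Tmat y c Γ' + 1)).PosSemidef := by
      have e : maxEig (Nmat y c Γ) • Γ' - (Tmat y c Γ' + 1)
          = ((α * maxEig (Nmat y c Γ)) • Tmat y c Γ - Tmat y c Γ')
            + (α * maxEig (Nmat y c Γ) - 1) • (1 : Matrix (Fin q) (Fin q) ℝ) := by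
        rw [hΓ'e]; module
      rw [e]
      exact hTT.add (psd_smul Matrix.PosSemidef.one (by linarith))
    have hfinal1 : (maxEig (Nmat y c Γ) • (1 : Matrix (Fin q) (Fin q) ℝ)
        - Nmat y c Γ').PosSemidef := by
      have h := psd_conj' hD1 hS'invH
      have e : (matSqrt Γ')⁻¹ * (maxEig (Nmat y c Γ) • Γ' - (Tmat y c Γ' + 1)) * (matSqrt Γ')⁻¹
          = maxEig (Nmat y c Γ) • (1 : Matrix (Fin q) (Fin q) ℝ) - Nmat y c Γ' := by
        rw [Matrix.mul_sub, Matrix.sub_mul, Matrix.mul_smul, Matrix.smul_mul, eΓ',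
          ← Nmat_eq y c hΓ'pd]
      rwa [e] at h
    exact maxEig_le hN'h fun i => (smul_one_sub_psd_iff hN'h).mp hfinal1 i
  · -- lower bound
    have hAq : (Nmat y c Γ - minEig (Nmat y c Γ) • (1 : Matrix (Fin q) (Fin q) ℝ)).PosSemidef :=
      (sub_smul_one_psd_iff hNh).mpr fun i => minEig_le hNh i
    have hTB : ((Tmat y c Γ + 1) - minEig (Nmat y c Γ) • Γ).PosSemidef := by
      have h := psd_conj' hAq hSh
      have e : matSqrt Γ * (Nmat y c Γ
            - minEig (Nmat y c Γ) • (1 : Matrix (Fin q) (Fin q) ℝ)) * matSqrt Γ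
          = (Tmat y c Γ + 1) - minEig (Nmat y c Γ) • Γ := by
        rw [Matrix.mul_sub, Matrix.sub_mul, conj_sqrt_Nmat y c hΓ, Matrix.mul_smul,
          Matrix.mul_one, Matrix.smul_mul, hSS]
      rwa [e] at h
    have hBΓ : (Γ' - (α * minEig (Nmat y c Γ)) • Γ).PosSemidef := by
      rw [hΓ'e]
      have e : α • (Tmat y c Γ + 1) - (α * minEig (Nmat y c Γ)) • Γ
          = α • ((Tmat y c Γ + 1) - minEig (Nmat y c Γ) • Γ) := by module
      rw [e]; exact psd_smul hTB hα.le
    have hPDq : ((α * minEig (Nmat y c Γ)) • Γ).PosDef := pd_smul hΓ (by positivity)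
    have hinvq : (((α * minEig (Nmat y c Γ)) • Γ)⁻¹ - Γ'⁻¹).PosSemidef :=
      inv_antitone hPDq hΓ'pd hBΓ
    have hsmulinv : ((α * minEig (Nmat y c Γ)) • Γ)⁻¹
        = (α * minEig (Nmat y c Γ))⁻¹ • Γ⁻¹ := by
      apply Matrix.inv_eq_right_inv
      rw [Matrix.smul_mul, Matrix.mul_smul, smul_smul, mul_nonsing_inv Γ hΓu,
        mul_inv_cancel₀ (by positivity : α * minEig (Nmat y c Γ) ≠ 0), one_smul]
    have hcoefq : ∀ i, (α * minEig (Nmat y c Γ)) * (y i ⬝ᵥ Γ⁻¹ *ᵥ y i)⁻¹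
        ≤ (y i ⬝ᵥ Γ'⁻¹ *ᵥ y i)⁻¹ := by
      intro i
      have hmono := dot_mono hinvq (y i)
      rw [hsmulinv, smul_mulVec, dotProduct_smul, smul_eq_mul] at hmono
      have h2 := inv_anti₀ (hw' i) hmono
      rwa [mul_inv, inv_inv] at h2
    have hTT : (Tmat y c Γ' - (α * minEig (Nmat y c Γ)) • Tmat y c Γ).PosSemidef := by
      have e : Tmat y c Γ' - (α * minEig (Nmat y c Γ)) • Tmat y c Γ
          = c • ∑ i, ((y i ⬝ᵥ Γ'⁻¹ *ᵥ y i)⁻¹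
              - (α * minEig (Nmat y c Γ)) * (y i ⬝ᵥ Γ⁻¹ *ᵥ y i)⁻¹) • vecMulVec (y i) (y i) := by
        rw [Tmat, Tmat, smul_comm (α * minEig (Nmat y c Γ)) c, ← smul_sub,
          Finset.smul_sum, ← Finset.sum_sub_distrib]
        congr 1
        refine Finset.sum_congr rfl fun i _ => ?_
        rw [smul_smul, ← sub_smul]
      rw [e]
      exact psd_smul (psd_sum _ fun i =>
        psd_smul (psd_vecMulVec _) (sub_nonneg.mpr (hcoefq i))) hc.le
    have hDq : ((Tmat y c Γ' + 1) - minEig (Nmat y c Γ) • Γ').PosSemidef := by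
      have e : (Tmat y c Γ' + 1) - minEig (Nmat y c Γ) • Γ'
          = (Tmat y c Γ' - (α * minEig (Nmat y c Γ)) • Tmat y c Γ)
            + (1 - α * minEig (Nmat y c Γ)) • (1 : Matrix (Fin q) (Fin q) ℝ) := by
        rw [hΓ'e]; module
      rw [e]
      exact hTT.add (psd_smul Matrix.PosSemidef.one (by linarith))
    have hfinalq : (Nmat y c Γ'
        - minEig (Nmat y c Γ) • (1 : Matrix (Fin q) (Fin q) ℝ)).PosSemidef := by
      have h := psd_conj' hDq hS'invH
      have e : (matSqrt Γ')⁻¹ * ((Tmat y c Γ' + 1) - minEig (Nmat y c Γ) • Γ') * (matSqrt Γ')⁻¹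
          = Nmat y c Γ' - minEig (Nmat y c Γ) • (1 : Matrix (Fin q) (Fin q) ℝ) := by
        rw [Matrix.mul_sub, Matrix.sub_mul, Matrix.mul_smul, Matrix.smul_mul, eΓ',
          ← Nmat_eq y c hΓ'pd]
      rwa [e] at h
    exact le_minEig hN'h fun i => (sub_smul_one_psd_iff hN'h).mp hfinalq i
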